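/- Proposition 1, case (B1): suppose in the estimating-function setup that Ã = A^{π_old}, Ṽ = V^{π_old} and d̃(·|a,s) = d^{π_old}(·|a,s) for all (a,s), while ω̃ : (A × S) × (A × S) → ℝ is an arbitrary function. Then E[ψ(O)] = η₁(π, π_old). -/

import Mathlib

namespace VEPO

variable {S A : Type} [Fintype S] [Fintype A] [DecidableEq S] [DecidableEq A]

/-- A probability mass function on a finite type, represented as a real-valued function. -/
def IsPMF {X : Type} [Fintype X] (f : X → ℝ) : Prop :=
  (∀ x, 0 ≤ f x) ∧ ∑ x : X, f x = 1

/-- A transition kernel: for each action-state pair `(a, s)`, a pmf `p a s` on next states. -/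
def IsKernel (p : A → S → S → ℝ) : Prop := ∀ a s, IsPMF (p a s)

/-- A policy: for each state `s`, a pmf `π s` on actions. -/
def IsPolicy (π : S → A → ℝ) : Prop := ∀ s, IsPMF (π s)

/-- The `t`-step visitation probability `p_t^π(s' | a, s)`. -/
def visit (p : A → S → S → ℝ) (π : S → A → ℝ) : ℕ → A → S → S → ℝ
  | 0, _, s, s' => if s' = s then 1 else 0
  | 1, a, s, s' => p a s s'
  | (t + 2), a, s, s' =>
      ∑ s'' : S, visit p π (t + 1) a s s'' * ∑ a'' : A, π s'' a'' * p a'' s'' s'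

/-- The Q-function `Q^π(a, s)`. -/
noncomputable def Qfun (p : A → S → S → ℝ) (r : S → A → ℝ) (γ : ℝ)
    (π : S → A → ℝ) (a : A) (s : S) : ℝ :=
  r s a + ∑' t : ℕ, γ ^ (t + 1) *
    ∑ s' : S, visit p π (t + 1) a s s' * ∑ a' : A, π s' a' * r s' a'

/-- The value function `V^π(s)`. -/
noncomputable def Vfun (p : A → S → S → ℝ) (r : S → A → ℝ) (γ : ℝ)
    (π : S → A → ℝ) (s : S) : ℝ :=
  ∑ a : A, π s a * Qfun p r γ π a s

/-- The advantage function `A^π(a, s)`. -/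
noncomputable def Adv (p : A → S → S → ℝ) (r : S → A → ℝ) (γ : ℝ)
    (π : S → A → ℝ) (a : A) (s : S) : ℝ :=
  Qfun p r γ π a s - Vfun p r γ π s

/-- The conditional discounted visitation probability `d^π(s' | a, s)`. -/
noncomputable def dvisit (p : A → S → S → ℝ) (γ : ℝ) (π : S → A → ℝ)
    (s' : S) (a : A) (s : S) : ℝ :=
  (1 - γ) * ∑' t : ℕ, γ ^ t * visit p π t a s s'

/-- The integrated discounted visitation probability `d^{π,ν}(s')`. -/
noncomputable def dnu (p : A → S → S → ℝ) (γ : ℝ) (ν : S → ℝ)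
    (π : S → A → ℝ) (s' : S) : ℝ :=
  ∑ s : S, ∑ a : A, π s a * ν s * dvisit p γ π s' a s

/-- The integrated value `V(π) = Σ_s ν(s) V^π(s)`. -/
noncomputable def IntV (p : A → S → S → ℝ) (r : S → A → ℝ) (γ : ℝ) (ν : S → ℝ)
    (π : S → A → ℝ) : ℝ :=
  ∑ s : S, ν s * Vfun p r γ π s

/-- The first-order term `η₁(π₁, π₂)`. -/
noncomputable def eta1 (p : A → S → S → ℝ) (r : S → A → ℝ) (γ : ℝ) (ν : S → ℝ)
    (π₁ π₂ : S → A → ℝ) : ℝ :=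
  ∑ a : A, ∑ s : S, π₁ s a * Adv p r γ π₂ a s * dnu p γ ν π₂ s

/-- The higher-order remainder `η₂(π₁, π₂)`. -/
noncomputable def eta2 (p : A → S → S → ℝ) (r : S → A → ℝ) (γ : ℝ) (ν : S → ℝ)
    (π₁ π₂ : S → A → ℝ) : ℝ :=
  ∑ a : A, ∑ s : S, (π₁ s a - π₂ s a) * Adv p r γ π₂ a s *
    (dnu p γ ν π₁ s - dnu p γ ν π₂ s)

/-- Total variation distance between two pmfs on a finite type. -/
noncomputable def DTV {X : Type} [Fintype X] (μ₁ μ₂ : X → ℝ) : ℝ :=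
  (1 / 2) * ∑ x : X, |μ₁ x - μ₂ x|

/-- Kullback–Leibler divergence between two pmfs on a finite type, valued in `EReal`
(equal to `⊤` if `μ₁` is not absolutely continuous w.r.t. `μ₂`). -/
noncomputable def DKL {X : Type} [Fintype X] (μ₁ μ₂ : X → ℝ) : EReal :=
  ∑ x : X, (if μ₁ x = 0 then (0 : EReal)
    else if μ₂ x = 0 then (⊤ : EReal)
    else ((μ₁ x * Real.log (μ₁ x / μ₂ x) : ℝ) : EReal))

/-- Conditional discounted stationary probability ratio `ω^π(a', s'; a, s)`. -/
noncomputable def ratio (p : A → S → S → ℝ) (γ : ℝ) (pinf : A → S → ℝ)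
    (π : S → A → ℝ) (a' : A) (s' : S) (a : A) (s : S) : ℝ :=
  (1 - γ) * ((if a' = a ∧ s' = s then 1 else 0) +
    ∑' t : ℕ, γ ^ (t + 1) * (π s' a' * visit p π (t + 1) a s s')) / pinf a' s'

/-- Integrated discounted stationary probability ratio `ω^{π,ν}(a', s')`. -/
noncomputable def rationu (p : A → S → S → ℝ) (γ : ℝ) (pinf : A → S → ℝ) (ν : S → ℝ)
    (π : S → A → ℝ) (a' : A) (s' : S) : ℝ :=
  ∑ a : A, ∑ s : S, π s a * ν s * ratio p γ pinf π a' s' a s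

/-- Marginal state distribution `p̄_t^{π,ν}` at time `t` when `S₀ ~ ν` and actions follow `π`. -/
def marg (p : A → S → S → ℝ) (π : S → A → ℝ) (ν : S → ℝ) : ℕ → S → ℝ
  | 0, s' => ν s'
  | (t + 1), s' => ∑ s : S, marg p π ν t s * ∑ a : A, π s a * p a s s'

/-- Conditional discounted state–action visitation `q^π(a', s'; a, s)`. -/
noncomputable def qvisit (p : A → S → S → ℝ) (γ : ℝ) (π : S → A → ℝ)
    (a' : A) (s' : S) (a : A) (s : S) : ℝ :=
  (1 - γ) * ((if a' = a ∧ s' = s then 1 else 0) +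
    ∑' t : ℕ, γ ^ (t + 1) * (π s' a' * visit p π (t + 1) a s s'))

/-- The estimating function `ψ(o) = ψ₁ + ψ₂(o) + ψ₃(o)` evaluated at a data tuple
`o = (s, a, rr, s')`, for nuisance functions `Ṽ = Vt`, `Ã = At`, `ω̃ = ωt`
(with `ωt a' s' a s = ω̃(a',s'; a,s)`) and `d̃ = dt` (with `dt s* a s = d̃(s* | a, s)`). -/
noncomputable def psi (γ : ℝ) (ν : S → ℝ) (π πold : S → A → ℝ)
    (Vt : S → ℝ) (At : A → S → ℝ) (ωt : A → S → A → S → ℝ) (dt : S → A → S → ℝ)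
    (s : S) (a : A) (rr : ℝ) (s' : S) : ℝ :=
  let dtnu : S → ℝ := fun sstar => ∑ a0 : A, ∑ s0 : S, πold s0 a0 * ν s0 * dt sstar a0 s0
  let ωtnu : A → S → ℝ := fun a1 s1 => ∑ a0 : A, ∑ s0 : S, πold s0 a0 * ν s0 * ωt a1 s1 a0 s0
  (∑ sstar : S, dtnu sstar * ∑ astar : A, π sstar astar * At astar sstar)
  + (1 / (1 - γ)) * ∑ sstar : S, dtnu sstar * ∑ astar : A,
      (π sstar astar - πold sstar astar) * ωt a s astar sstar *
        (rr + γ * Vt s' - Vt s - At a s)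
  + (ωtnu a s / (1 - γ)) * ∑ astar : A,
      (γ * ∑ a' : A, πold s' a' * ∑ sstar : S, dt sstar a' s' * π sstar astar * At astar sstar
       - ∑ sstar : S, dt sstar a s * π sstar astar * At astar sstar
       + (1 - γ) * π s astar * At astar s)

/-- The expectation `E[ψ(O)]` of the estimating function, where `(A₀, S₀) ~ p_∞`,
`S₁ | (A₀, S₀) ~ p(· | A₀, S₀)` and `E[R₀ | A₀, S₀] = r(S₀, A₀)`;  since `ψ` is affine
in its reward argument with a coefficient not depending on `s'`, this finite sum is
exactly the expectation of `ψ(O)`. -/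
noncomputable def Epsi (p : A → S → S → ℝ) (r : S → A → ℝ) (γ : ℝ) (ν : S → ℝ)
    (pinf : A → S → ℝ) (π πold : S → A → ℝ)
    (Vt : S → ℝ) (At : A → S → ℝ) (ωt : A → S → A → S → ℝ) (dt : S → A → S → ℝ) : ℝ :=
  ∑ a : A, ∑ s : S, pinf a s * ∑ s' : S, p a s s' *
    psi γ ν π πold Vt At ωt dt s a (r s a) s'

section Aux
set_option linter.unusedSectionVars false

variable {p : A → S → S → ℝ} {π : S → A → ℝ} {γ : ℝ} {r : S → A → ℝ}

lemma visit_nonneg (hp : IsKernel p) (hπ : IsPolicy π) :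
    ∀ (t : ℕ) (a : A) (s s' : S), 0 ≤ visit p π t a s s'
  | 0, a, s, s' => by unfold visit; split <;> norm_num
  | 1, a, s, s' => (hp a s).1 s'
  | (t+2), a, s, s' => by
      unfold visit
      exact Finset.sum_nonneg fun s'' _ => mul_nonneg (visit_nonneg hp hπ (t+1) a s s'')
        (Finset.sum_nonneg fun a'' _ => mul_nonneg ((hπ s'').1 a'') ((hp a'' s'').1 s'))

lemma visit_sum_one (hp : IsKernel p) (hπ : IsPolicy π) :
    ∀ (t : ℕ) (a : A) (s : S), ∑ s' : S, visit p π t a s s' = 1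
  | 0, a, s => by simp [visit]
  | 1, a, s => (hp a s).2
  | (t+2), a, s => by
      unfold visit
      rw [Finset.sum_comm]
      calc ∑ s'' : S, ∑ s' : S, visit p π (t+1) a s s'' * ∑ a'' : A, π s'' a'' * p a'' s'' s'
          = ∑ s'' : S, visit p π (t+1) a s s'' * ∑ s' : S, ∑ a'' : A, π s'' a'' * p a'' s'' s' := by
            simp [Finset.mul_sum]
        _ = ∑ s'' : S, visit p π (t+1) a s s'' := by
            refine Finset.sum_congr rfl fun s'' _ => ?_
            rw [Finset.sum_comm]
            have : ∀ a'' : A, ∑ s' : S, π s'' a'' * p a'' s'' s' = π s'' a'' := by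
              intro a''; rw [← Finset.mul_sum, (hp a'' s'').2, mul_one]
            simp [this, (hπ s'').2]
        _ = 1 := visit_sum_one hp hπ (t+1) a s

lemma visit_le_one (hp : IsKernel p) (hπ : IsPolicy π) (t : ℕ) (a : A) (s s' : S) :
    visit p π t a s s' ≤ 1 := by
  rw [← visit_sum_one hp hπ t a s]
  exact Finset.single_le_sum (fun i _ => visit_nonneg hp hπ t a s i) (Finset.mem_univ s')

lemma visit_avg (hp : IsKernel p) (hπ : IsPolicy π) (t : ℕ) (s' sstar : S) :
    ∑ a' : A, π s' a' * visit p π (t+1) a' s' sstar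
      = ∑ s'' : S, (∑ a' : A, π s' a' * visit p π t a' s' s'') *
          ∑ a'' : A, π s'' a'' * p a'' s'' sstar := by
  cases t with
  | zero =>
      simp only [visit, mul_ite, mul_one, mul_zero]
      rw [Finset.sum_eq_single s']
      · simp [(hπ s').2]
      · intro b _ hb
        simp [Finset.sum_ite_of_false, hb]
      · simp
  | succ t =>
      show ∑ a' : A, π s' a' * ∑ s'' : S, visit p π (t+1) a' s' s'' *
          ∑ a'' : A, π s'' a'' * p a'' s'' sstar = _
      calc ∑ a' : A, π s' a' * ∑ s'' : S, visit p π (t+1) a' s' s'' *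
              ∑ a'' : A, π s'' a'' * p a'' s'' sstar
          = ∑ a' : A, ∑ s'' : S, π s' a' * (visit p π (t+1) a' s' s'' *
              ∑ a'' : A, π s'' a'' * p a'' s'' sstar) := by
            exact Finset.sum_congr rfl fun a' _ => Finset.mul_sum _ _ _
        _ = ∑ s'' : S, ∑ a' : A, π s' a' * (visit p π (t+1) a' s' s'' *
              ∑ a'' : A, π s'' a'' * p a'' s'' sstar) := Finset.sum_comm
        _ = ∑ s'' : S, (∑ a' : A, π s' a' * visit p π (t+1) a' s' s'') *
              ∑ a'' : A, π s'' a'' * p a'' s'' sstar := by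
            refine Finset.sum_congr rfl fun s'' _ => ?_
            rw [Finset.sum_mul]
            exact Finset.sum_congr rfl fun a' _ => by ring

lemma visit_succ (hp : IsKernel p) (hπ : IsPolicy π) :
    ∀ (t : ℕ) (a : A) (s sstar : S),
      visit p π (t+1) a s sstar
        = ∑ s' : S, p a s s' * ∑ a' : A, π s' a' * visit p π t a' s' sstar
  | 0, a, s, sstar => by
      simp only [visit, mul_ite, mul_one, mul_zero]
      have : ∀ s' : S, (∑ a' : A, if sstar = s' then π s' a' else 0)
          = if sstar = s' then 1 else 0 := by
        intro s'; split <;> simp_all [(hπ _).2]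
      simp only [this, mul_ite, mul_one, mul_zero, Finset.sum_ite_eq, Finset.mem_univ, if_true]
  | (t+1), a, s, sstar => by
      show ∑ s'' : S, visit p π (t+1) a s s'' * ∑ a'' : A, π s'' a'' * p a'' s'' sstar = _
      calc ∑ s'' : S, visit p π (t+1) a s s'' * ∑ a'' : A, π s'' a'' * p a'' s'' sstar
          = ∑ s'' : S, (∑ s' : S, p a s s' * ∑ a' : A, π s' a' * visit p π t a' s' s'') *
              ∑ a'' : A, π s'' a'' * p a'' s'' sstar := by
            refine Finset.sum_congr rfl fun s'' _ => ?_
            rw [visit_succ hp hπ t a s s'']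
        _ = ∑ s'' : S, ∑ s' : S, (p a s s' * ∑ a' : A, π s' a' * visit p π t a' s' s'') *
                ∑ a'' : A, π s'' a'' * p a'' s'' sstar := by
            exact Finset.sum_congr rfl fun s'' _ => Finset.sum_mul _ _ _
        _ = ∑ s' : S, ∑ s'' : S, (p a s s' * ∑ a' : A, π s' a' * visit p π t a' s' s'') *
                ∑ a'' : A, π s'' a'' * p a'' s'' sstar := Finset.sum_comm
        _ = ∑ s' : S, p a s s' *
              ∑ s'' : S, (∑ a' : A, π s' a' * visit p π t a' s' s'') *
                ∑ a'' : A, π s'' a'' * p a'' s'' sstar := by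
            refine Finset.sum_congr rfl fun s' _ => ?_
            rw [Finset.mul_sum]
            exact Finset.sum_congr rfl fun s'' _ => by ring
        _ = ∑ s' : S, p a s s' * ∑ a' : A, π s' a' * visit p π (t+1) a' s' sstar := by
            refine Finset.sum_congr rfl fun s' _ => ?_
            rw [← visit_avg hp hπ t s' sstar]

lemma summable_aux {f : ℕ → ℝ} {C : ℝ} (hγ0 : 0 ≤ γ) (hγ1 : γ < 1)
    (h : ∀ t, |f t| ≤ C * γ ^ t) : Summable f :=
  Summable.of_norm_bounded ((summable_geometric_of_lt_one hγ0 hγ1).mul_left C)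
    (by simpa [Real.norm_eq_abs] using h)

lemma abs_visit_sum_le (hp : IsKernel p) (hπ : IsPolicy π) (t : ℕ) (a : A) (s : S) (f : S → ℝ) :
    |∑ s' : S, visit p π t a s s' * f s'| ≤ ∑ s' : S, |f s'| := by
  calc |∑ s' : S, visit p π t a s s' * f s'| ≤ ∑ s' : S, |visit p π t a s s' * f s'| :=
        Finset.abs_sum_le_sum_abs _ _
    _ ≤ ∑ s' : S, |f s'| := by
        refine Finset.sum_le_sum fun s' _ => ?_
        rw [abs_mul, abs_of_nonneg (visit_nonneg hp hπ t a s s')]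
        calc visit p π t a s s' * |f s'| ≤ 1 * |f s'| :=
              mul_le_mul_of_nonneg_right (visit_le_one hp hπ t a s s') (abs_nonneg _)
          _ = |f s'| := one_mul _

/-- Auxiliary: `W t s`. -/
noncomputable def Wf (p : A → S → S → ℝ) (r : S → A → ℝ) (π : S → A → ℝ) (t : ℕ) (s : S) : ℝ :=
  ∑ a : A, π s a * ∑ s' : S, visit p π t a s s' * ∑ a' : A, π s' a' * r s' a'

lemma summable_Q (hp : IsKernel p) (hπ : IsPolicy π) (hγ0 : 0 ≤ γ) (hγ1 : γ < 1) (a : A) (s : S) :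
    Summable fun t : ℕ => γ ^ (t+1) * ∑ s' : S, visit p π (t+1) a s s' *
      ∑ a' : A, π s' a' * r s' a' := by
  refine summable_aux (C := γ * ∑ s' : S, |∑ a' : A, π s' a' * r s' a'|) hγ0 hγ1 fun t => ?_
  rw [abs_mul, abs_pow, abs_of_nonneg hγ0]
  calc γ ^ (t+1) * |∑ s' : S, visit p π (t+1) a s s' * ∑ a' : A, π s' a' * r s' a'|
      ≤ γ ^ (t+1) * ∑ s' : S, |∑ a' : A, π s' a' * r s' a'| :=
        mul_le_mul_of_nonneg_left (abs_visit_sum_le hp hπ _ a s _) (pow_nonneg hγ0 _)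
    _ = γ * (∑ s' : S, |∑ a' : A, π s' a' * r s' a'|) * γ ^ t := by ring

lemma abs_Wf_le (hp : IsKernel p) (hπ : IsPolicy π) (t : ℕ) (s : S) :
    |Wf p r π t s| ≤ ∑ s' : S, |∑ a' : A, π s' a' * r s' a'| := by
  calc |Wf p r π t s| ≤ ∑ a : A, |π s a * ∑ s' : S, visit p π t a s s' *
        ∑ a' : A, π s' a' * r s' a'| := Finset.abs_sum_le_sum_abs _ _
    _ ≤ ∑ a : A, π s a * ∑ s' : S, |∑ a' : A, π s' a' * r s' a'| := by
        refine Finset.sum_le_sum fun a _ => ?_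
        rw [abs_mul, abs_of_nonneg ((hπ s).1 a)]
        exact mul_le_mul_of_nonneg_left (abs_visit_sum_le hp hπ t a s _) ((hπ s).1 a)
    _ = ∑ s' : S, |∑ a' : A, π s' a' * r s' a'| := by
        rw [← Finset.sum_mul, (hπ s).2, one_mul]

lemma summable_W (hp : IsKernel p) (hπ : IsPolicy π) (hγ0 : 0 ≤ γ) (hγ1 : γ < 1) (s : S) :
    Summable fun t : ℕ => γ ^ t * Wf p r π t s := by
  refine summable_aux (C := ∑ s' : S, |∑ a' : A, π s' a' * r s' a'|) hγ0 hγ1 fun t => ?_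
  rw [abs_mul, abs_pow, abs_of_nonneg hγ0, mul_comm (γ ^ t)]
  exact mul_le_mul_of_nonneg_right (abs_Wf_le hp hπ t s) (pow_nonneg hγ0 t)

lemma Wf_zero (hπ : IsPolicy π) (s : S) :
    Wf p r π 0 s = ∑ a' : A, π s a' * r s a' := by
  unfold Wf
  have h : ∀ a : A, ∑ s' : S, visit p π 0 a s s' * ∑ a' : A, π s' a' * r s' a'
      = ∑ a' : A, π s a' * r s a' := by
    intro a
    simp [visit, ite_mul, Finset.sum_ite_eq', Finset.mem_univ]
  simp only [h]
  rw [← Finset.sum_mul, (hπ s).2, one_mul]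

lemma Vfun_tsum (hp : IsKernel p) (hπ : IsPolicy π) (hγ0 : 0 ≤ γ) (hγ1 : γ < 1) (s : S) :
    Vfun p r γ π s = ∑' t : ℕ, γ ^ t * Wf p r π t s := by
  have hXsum : ∀ a : A, Summable fun t : ℕ => γ ^ (t+1) *
      ∑ s' : S, visit p π (t+1) a s s' * ∑ a' : A, π s' a' * r s' a' :=
    fun a => summable_Q hp hπ hγ0 hγ1 a s
  rw [Summable.tsum_eq_zero_add (summable_W hp hπ hγ0 hγ1 s), pow_zero, one_mul, Wf_zero hπ s]
  unfold Vfun Qfun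
  have h1 : ∑ a : A, π s a * (r s a + ∑' t : ℕ, γ ^ (t+1) * ∑ s' : S, visit p π (t+1) a s s' *
        ∑ a' : A, π s' a' * r s' a')
      = ∑ a : A, π s a * r s a + ∑ a : A, ∑' t : ℕ, γ ^ (t+1) *
        (π s a * ∑ s' : S, visit p π (t+1) a s s' * ∑ a' : A, π s' a' * r s' a') := by
    rw [← Finset.sum_add_distrib]
    refine Finset.sum_congr rfl fun a _ => ?_
    rw [mul_add, ← tsum_mul_left]
    congr 1
    exact tsum_congr fun t => by ring
  rw [h1]
  congr 1
  rw [← Summable.tsum_finsetSum (fun a _ => Summable.congr ((hXsum a).mul_left (π s a)) (fun t => by ring))]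
  refine tsum_congr fun t => ?_
  unfold Wf
  rw [Finset.mul_sum]

lemma visit_step_sum (hp : IsKernel p) (hπ : IsPolicy π) (t : ℕ) (a : A) (s : S) (f : S → ℝ) :
    ∑ s' : S, visit p π (t+1) a s s' * f s'
      = ∑ s0 : S, p a s s0 * ∑ a0 : A, π s0 a0 * ∑ s' : S, visit p π t a0 s0 s' * f s' := by
  calc ∑ s' : S, visit p π (t+1) a s s' * f s'
      = ∑ s' : S, ∑ s0 : S, (p a s s0 * ∑ a0 : A, π s0 a0 * visit p π t a0 s0 s') * f s' := by
        refine Finset.sum_congr rfl fun s' _ => ?_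
        rw [visit_succ hp hπ t a s s', Finset.sum_mul]
    _ = ∑ s0 : S, ∑ s' : S, (p a s s0 * ∑ a0 : A, π s0 a0 * visit p π t a0 s0 s') * f s' :=
        Finset.sum_comm
    _ = ∑ s0 : S, p a s s0 * ∑ a0 : A, π s0 a0 * ∑ s' : S, visit p π t a0 s0 s' * f s' := by
        refine Finset.sum_congr rfl fun s0 _ => ?_
        calc ∑ s' : S, (p a s s0 * ∑ a0 : A, π s0 a0 * visit p π t a0 s0 s') * f s'
            = ∑ s' : S, ∑ a0 : A, p a s s0 * (π s0 a0 * (visit p π t a0 s0 s' * f s')) := by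
              refine Finset.sum_congr rfl fun s' _ => ?_
              rw [Finset.mul_sum, Finset.sum_mul]
              exact Finset.sum_congr rfl fun a0 _ => by ring
          _ = ∑ a0 : A, ∑ s' : S, p a s s0 * (π s0 a0 * (visit p π t a0 s0 s' * f s')) :=
              Finset.sum_comm
          _ = p a s s0 * ∑ a0 : A, π s0 a0 * ∑ s' : S, visit p π t a0 s0 s' * f s' := by
              rw [Finset.mul_sum]
              refine Finset.sum_congr rfl fun a0 _ => ?_
              rw [Finset.mul_sum, Finset.mul_sum]

lemma bellman (hp : IsKernel p) (hπ : IsPolicy π) (hγ0 : 0 ≤ γ) (hγ1 : γ < 1) (a : A) (s : S) :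
    Qfun p r γ π a s = r s a + γ * ∑ s' : S, p a s s' * Vfun p r γ π s' := by
  unfold Qfun
  congr 1
  have key : ∀ t : ℕ, ∑ s' : S, visit p π (t+1) a s s' * ∑ a' : A, π s' a' * r s' a'
      = ∑ s0 : S, p a s s0 * Wf p r π t s0 := by
    intro t
    rw [visit_step_sum hp hπ t a s]
    rfl
  calc ∑' t : ℕ, γ ^ (t+1) * ∑ s' : S, visit p π (t+1) a s s' * ∑ a' : A, π s' a' * r s' a'
      = ∑' t : ℕ, ∑ s0 : S, γ * (p a s s0 * (γ ^ t * Wf p r π t s0)) := by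
        refine tsum_congr fun t => ?_
        rw [key t, Finset.mul_sum]
        exact Finset.sum_congr rfl fun s0 _ => by ring
    _ = ∑ s0 : S, ∑' t : ℕ, γ * (p a s s0 * (γ ^ t * Wf p r π t s0)) :=
        Summable.tsum_finsetSum fun s0 _ => ((summable_W hp hπ hγ0 hγ1 s0).mul_left (p a s s0)).mul_left γ
    _ = γ * ∑ s0 : S, p a s s0 * Vfun p r γ π s0 := by
        rw [Finset.mul_sum]
        refine Finset.sum_congr rfl fun s0 _ => ?_
        rw [tsum_mul_left, tsum_mul_left, Vfun_tsum hp hπ hγ0 hγ1 s0]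

lemma dvisit_flow (hp : IsKernel p) (hπ : IsPolicy π) (hγ0 : 0 ≤ γ) (hγ1 : γ < 1)
    (sstar : S) (a : A) (s : S) :
    dvisit p γ π sstar a s = (1-γ) * (if sstar = s then 1 else 0)
      + γ * ∑ s' : S, p a s s' * ∑ a' : A, π s' a' * dvisit p γ π sstar a' s' := by
  have hsum : ∀ (a : A) (s : S), Summable fun t : ℕ => γ ^ t * visit p π t a s sstar := by
    intro a s
    refine summable_aux (C := 1) hγ0 hγ1 fun t => ?_
    rw [abs_mul, abs_pow, abs_of_nonneg hγ0, one_mul,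
      abs_of_nonneg (visit_nonneg hp hπ t a s sstar)]
    calc γ ^ t * visit p π t a s sstar ≤ γ ^ t * 1 :=
          mul_le_mul_of_nonneg_left (visit_le_one hp hπ t a s sstar) (pow_nonneg hγ0 t)
      _ = γ ^ t := mul_one _
  have key : ∑' t : ℕ, γ ^ (t+1) * visit p π (t+1) a s sstar
      = ∑ s' : S, p a s s' *
          (γ * ∑' t : ℕ, γ ^ t * ∑ a' : A, π s' a' * visit p π t a' s' sstar) := by
    have hU : ∀ s' : S, Summable fun t : ℕ =>
        γ ^ t * ∑ a' : A, π s' a' * visit p π t a' s' sstar := by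
      intro s'
      have h2 : Summable fun t : ℕ => ∑ a' : A, π s' a' * (γ ^ t * visit p π t a' s' sstar) :=
        summable_sum fun a' _ => (hsum a' s').mul_left _
      exact h2.congr fun t => by
        rw [Finset.mul_sum]
        exact Finset.sum_congr rfl fun a' _ => by ring
    calc ∑' t : ℕ, γ ^ (t+1) * visit p π (t+1) a s sstar
        = ∑' t : ℕ, ∑ s' : S, p a s s' *
            (γ * (γ ^ t * ∑ a' : A, π s' a' * visit p π t a' s' sstar)) := by
          refine tsum_congr fun t => ?_
          rw [visit_succ hp hπ t a s sstar, Finset.mul_sum]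
          exact Finset.sum_congr rfl fun s' _ => by ring
      _ = ∑ s' : S, ∑' t : ℕ, p a s s' *
            (γ * (γ ^ t * ∑ a' : A, π s' a' * visit p π t a' s' sstar)) :=
          Summable.tsum_finsetSum fun s' _ => ((hU s').mul_left γ).mul_left (p a s s')
      _ = ∑ s' : S, p a s s' *
            (γ * ∑' t : ℕ, γ ^ t * ∑ a' : A, π s' a' * visit p π t a' s' sstar) := by
          refine Finset.sum_congr rfl fun s' _ => ?_
          rw [tsum_mul_left, tsum_mul_left]
  have swap : ∀ s' : S, ∑ a' : A, π s' a' * ∑' t : ℕ, γ ^ t * visit p π t a' s' sstar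
      = ∑' t : ℕ, γ ^ t * ∑ a' : A, π s' a' * visit p π t a' s' sstar := by
    intro s'
    calc ∑ a' : A, π s' a' * ∑' t : ℕ, γ ^ t * visit p π t a' s' sstar
        = ∑ a' : A, ∑' t : ℕ, π s' a' * (γ ^ t * visit p π t a' s' sstar) :=
          Finset.sum_congr rfl fun a' _ => (tsum_mul_left).symm
      _ = ∑' t : ℕ, ∑ a' : A, π s' a' * (γ ^ t * visit p π t a' s' sstar) :=
          (Summable.tsum_finsetSum fun a' _ => (hsum a' s').mul_left _).symm
      _ = ∑' t : ℕ, γ ^ t * ∑ a' : A, π s' a' * visit p π t a' s' sstar := by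
          refine tsum_congr fun t => ?_
          rw [Finset.mul_sum]
          exact Finset.sum_congr rfl fun a' _ => by ring
  unfold dvisit
  rw [Summable.tsum_eq_zero_add (hsum a s), pow_zero, one_mul]
  have h0 : visit p π 0 a s sstar = (if sstar = s then 1 else 0) := rfl
  rw [h0, key, mul_add]
  congr 1
  have hrhs : ∀ s' : S, ∑ a' : A, π s' a' *
        ((1-γ) * ∑' t : ℕ, γ ^ t * visit p π t a' s' sstar)
      = (1-γ) * ∑' t : ℕ, γ ^ t * ∑ a' : A, π s' a' * visit p π t a' s' sstar := by
    intro s'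
    rw [← swap s', Finset.mul_sum]
    exact Finset.sum_congr rfl fun a' _ => by ring
  simp only [hrhs]
  rw [Finset.mul_sum, Finset.mul_sum]
  exact Finset.sum_congr rfl fun s' _ => by ring

end Aux
theorem estimating_function_unbiased_B1 {S A : Type} [Fintype S] [Fintype A] [DecidableEq S] [DecidableEq A]
    [Nonempty S] [Nonempty A]
    (p : A → S → S → ℝ) (r : S → A → ℝ) (γ : ℝ) (ν : S → ℝ) (pinf : A → S → ℝ) (Rmax : ℝ)
    (hp : IsKernel p) (hr : ∀ s a, |r s a| ≤ Rmax)
    (hγ0 : 0 ≤ γ) (hγ1 : γ < 1) (hν : IsPMF ν)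
    (hpinf : IsPMF (fun as : A × S => pinf as.1 as.2)) (hpos : ∀ a s, 0 < pinf a s)
    (π πold : S → A → ℝ) (hπ : IsPolicy π) (hold : IsPolicy πold)
    (ωt : A → S → A → S → ℝ) :
    Epsi p r γ ν pinf π πold (Vfun p r γ πold) (Adv p r γ πold) ωt (dvisit p γ πold) =
      eta1 p r γ ν π πold := by
  classical
  have hpsum : ∀ (a : A) (s : S), ∑ s' : S, p a s s' = 1 := fun a s => (hp a s).2
  -- Bellman: the TD-error term integrates to zero
  have hbell : ∀ (a : A) (s : S),
      ∑ s' : S, p a s s' *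
        (r s a + γ * Vfun p r γ πold s' - Vfun p r γ πold s - Adv p r γ πold a s) = 0 := by
    intro a s
    have h1 : ∑ s' : S, p a s s' *
          (r s a + γ * Vfun p r γ πold s' - Vfun p r γ πold s - Adv p r γ πold a s)
        = (∑ s' : S, p a s s') * (r s a - Vfun p r γ πold s - Adv p r γ πold a s)
          + γ * ∑ s' : S, p a s s' * Vfun p r γ πold s' := by
      rw [Finset.sum_mul, Finset.mul_sum, ← Finset.sum_add_distrib]
      exact Finset.sum_congr rfl fun s' _ => by ring
    rw [h1, hpsum, one_mul]
    have hA : Adv p r γ πold a s = Qfun p r γ πold a s - Vfun p r γ πold s := rfl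
    have hb := bellman (r := r) hp hold hγ0 hγ1 a s
    rw [hA, hb]
    ring
  -- Flow identity for the discounted visitation
  have hflow : ∀ (sstar : S) (a : A) (s : S),
      γ * ∑ s' : S, p a s s' * ∑ a' : A, πold s' a' * dvisit p γ πold sstar a' s'
        = dvisit p γ πold sstar a s - (1-γ) * (if sstar = s then 1 else 0) := by
    intro sstar a s
    have h := dvisit_flow hp hold hγ0 hγ1 sstar a s
    linarith [h]
  -- key: integrating ψ over s' gives the constant ψ₁
  have key : ∀ (a : A) (s : S),
      ∑ s' : S, p a s s' *
        psi γ ν π πold (Vfun p r γ πold) (Adv p r γ πold) ωt (dvisit p γ πold) s a (r s a) s'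
      = ∑ sstar : S,
          (∑ a0 : A, ∑ s0 : S, πold s0 a0 * ν s0 * dvisit p γ πold sstar a0 s0) *
          ∑ astar : A, π sstar astar * Adv p r γ πold astar sstar := by
    intro a s
    have hpsi_def : ∀ s' : S,
        psi γ ν π πold (Vfun p r γ πold) (Adv p r γ πold) ωt (dvisit p γ πold) s a (r s a) s'
        = (∑ sstar : S,
            (∑ a0 : A, ∑ s0 : S, πold s0 a0 * ν s0 * dvisit p γ πold sstar a0 s0) *
            ∑ astar : A, π sstar astar * Adv p r γ πold astar sstar)
          + (1 / (1 - γ)) * ∑ sstar : S,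
              (∑ a0 : A, ∑ s0 : S, πold s0 a0 * ν s0 * dvisit p γ πold sstar a0 s0) *
              ∑ astar : A, (π sstar astar - πold sstar astar) * ωt a s astar sstar *
                (r s a + γ * Vfun p r γ πold s' - Vfun p r γ πold s - Adv p r γ πold a s)
          + ((∑ a0 : A, ∑ s0 : S, πold s0 a0 * ν s0 * ωt a s a0 s0) / (1 - γ)) *
              ∑ astar : A,
                (γ * ∑ a' : A, πold s' a' * ∑ sstar : S,
                    dvisit p γ πold sstar a' s' * π sstar astar * Adv p r γ πold astar sstar
                  - ∑ sstar : S, dvisit p γ πold sstar a s * π sstar astar *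
                      Adv p r γ πold astar sstar
                  + (1 - γ) * π s astar * Adv p r γ πold astar s) := fun s' => rfl
    -- factor the TD error out of the second term
    have hT2 : ∀ s' : S,
        ∑ sstar : S,
            (∑ a0 : A, ∑ s0 : S, πold s0 a0 * ν s0 * dvisit p γ πold sstar a0 s0) *
            ∑ astar : A, (π sstar astar - πold sstar astar) * ωt a s astar sstar *
              (r s a + γ * Vfun p r γ πold s' - Vfun p r γ πold s - Adv p r γ πold a s)
        = (∑ sstar : S,
            (∑ a0 : A, ∑ s0 : S, πold s0 a0 * ν s0 * dvisit p γ πold sstar a0 s0) *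
            ∑ astar : A, (π sstar astar - πold sstar astar) * ωt a s astar sstar) *
              (r s a + γ * Vfun p r γ πold s' - Vfun p r γ πold s - Adv p r γ πold a s) := by
      intro s'
      rw [Finset.sum_mul]
      refine Finset.sum_congr rfl fun sstar _ => ?_
      conv_rhs => rw [mul_assoc]
      congr 1
      exact (Finset.sum_mul _ _ _).symm
    -- the third term integrates to zero
    have hB : ∑ s' : S, p a s s' *
        ∑ astar : A,
          (γ * ∑ a' : A, πold s' a' * ∑ sstar : S,
              dvisit p γ πold sstar a' s' * π sstar astar * Adv p r γ πold astar sstar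
            - ∑ sstar : S, dvisit p γ πold sstar a s * π sstar astar *
                Adv p r γ πold astar sstar
            + (1 - γ) * π s astar * Adv p r γ πold astar s) = 0 := by
      have hswap : ∑ s' : S, p a s s' *
          ∑ astar : A,
            (γ * ∑ a' : A, πold s' a' * ∑ sstar : S,
                dvisit p γ πold sstar a' s' * π sstar astar * Adv p r γ πold astar sstar
              - ∑ sstar : S, dvisit p γ πold sstar a s * π sstar astar *
                  Adv p r γ πold astar sstar
              + (1 - γ) * π s astar * Adv p r γ πold astar s)
          = ∑ astar : A, ∑ s' : S, p a s s' *
            (γ * ∑ a' : A, πold s' a' * ∑ sstar : S,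
                dvisit p γ πold sstar a' s' * π sstar astar * Adv p r γ πold astar sstar
              - ∑ sstar : S, dvisit p γ πold sstar a s * π sstar astar *
                  Adv p r γ πold astar sstar
              + (1 - γ) * π s astar * Adv p r γ πold astar s) := by
        rw [Finset.sum_comm]
        exact Finset.sum_congr rfl fun s' _ => Finset.mul_sum _ _ _
      rw [hswap]
      refine Finset.sum_eq_zero fun astar _ => ?_
      have h2 : ∑ s' : S, p a s s' *
            (γ * ∑ a' : A, πold s' a' * ∑ sstar : S,
                dvisit p γ πold sstar a' s' * π sstar astar * Adv p r γ πold astar sstar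
              - ∑ sstar : S, dvisit p γ πold sstar a s * π sstar astar *
                  Adv p r γ πold astar sstar
              + (1 - γ) * π s astar * Adv p r γ πold astar s)
          = γ * ∑ s' : S, p a s s' * ∑ a' : A, πold s' a' * ∑ sstar : S,
                dvisit p γ πold sstar a' s' * π sstar astar * Adv p r γ πold astar sstar
            + (∑ s' : S, p a s s') *
              ((1 - γ) * π s astar * Adv p r γ πold astar s
                - ∑ sstar : S, dvisit p γ πold sstar a s * π sstar astar *
                    Adv p r γ πold astar sstar) := by
        rw [Finset.mul_sum, Finset.sum_mul, ← Finset.sum_add_distrib]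
        exact Finset.sum_congr rfl fun s' _ => by ring
      rw [h2, hpsum, one_mul]
      have h3 : ∑ s' : S, p a s s' * ∑ a' : A, πold s' a' * ∑ sstar : S,
            dvisit p γ πold sstar a' s' * π sstar astar * Adv p r γ πold astar sstar
          = ∑ sstar : S,
              (∑ s' : S, p a s s' * ∑ a' : A, πold s' a' * dvisit p γ πold sstar a' s') *
              (π sstar astar * Adv p r γ πold astar sstar) := by
        calc ∑ s' : S, p a s s' * ∑ a' : A, πold s' a' * ∑ sstar : S,
              dvisit p γ πold sstar a' s' * π sstar astar * Adv p r γ πold astar sstar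
            = ∑ s' : S, ∑ a' : A, ∑ sstar : S, p a s s' * (πold s' a' *
                (dvisit p γ πold sstar a' s' * (π sstar astar * Adv p r γ πold astar sstar))) := by
              refine Finset.sum_congr rfl fun s' _ => ?_
              rw [Finset.mul_sum]
              refine Finset.sum_congr rfl fun a' _ => ?_
              rw [Finset.mul_sum, Finset.mul_sum]
              exact Finset.sum_congr rfl fun sstar _ => by ring
          _ = ∑ s' : S, ∑ sstar : S, ∑ a' : A, p a s s' * (πold s' a' *
                (dvisit p γ πold sstar a' s' * (π sstar astar * Adv p r γ πold astar sstar))) :=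
              Finset.sum_congr rfl fun s' _ => Finset.sum_comm
          _ = ∑ sstar : S, ∑ s' : S, ∑ a' : A, p a s s' * (πold s' a' *
                (dvisit p γ πold sstar a' s' * (π sstar astar * Adv p r γ πold astar sstar))) :=
              Finset.sum_comm
          _ = ∑ sstar : S,
                (∑ s' : S, p a s s' * ∑ a' : A, πold s' a' * dvisit p γ πold sstar a' s') *
                (π sstar astar * Adv p r γ πold astar sstar) := by
              refine Finset.sum_congr rfl fun sstar _ => ?_
              rw [Finset.sum_mul]
              refine Finset.sum_congr rfl fun s' _ => ?_
              rw [Finset.mul_sum, Finset.sum_mul]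
              exact Finset.sum_congr rfl fun a' _ => by ring
      have h4 : γ * ∑ s' : S, p a s s' * ∑ a' : A, πold s' a' * ∑ sstar : S,
            dvisit p γ πold sstar a' s' * π sstar astar * Adv p r γ πold astar sstar
          = ∑ sstar : S,
              (dvisit p γ πold sstar a s - (1-γ) * (if sstar = s then 1 else 0)) *
              (π sstar astar * Adv p r γ πold astar sstar) := by
        rw [h3, Finset.mul_sum]
        refine Finset.sum_congr rfl fun sstar _ => ?_
        rw [← mul_assoc, hflow sstar a s]
      rw [h4]
      have h5 : ∑ sstar : S,
            (dvisit p γ πold sstar a s - (1-γ) * (if sstar = s then 1 else 0)) *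
            (π sstar astar * Adv p r γ πold astar sstar)
          = (∑ sstar : S, dvisit p γ πold sstar a s * π sstar astar *
              Adv p r γ πold astar sstar)
            - (1 - γ) * π s astar * Adv p r γ πold astar s := by
        have h6 : ∀ sstar : S,
            (dvisit p γ πold sstar a s - (1-γ) * (if sstar = s then 1 else 0)) *
              (π sstar astar * Adv p r γ πold astar sstar)
            = dvisit p γ πold sstar a s * π sstar astar * Adv p r γ πold astar sstar
              - (if sstar = s then (1 - γ) * π s astar * Adv p r γ πold astar s else 0) := by
          intro sstar
          by_cases hss : sstar = s
          · subst hss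
            rw [if_pos rfl, if_pos rfl]
            ring
          · rw [if_neg hss, if_neg hss]
            ring
        simp only [h6]
        rw [Finset.sum_sub_distrib]
        congr 1
        simp
      rw [h5]
      ring
    -- put the three pieces together
    calc ∑ s' : S, p a s s' *
          psi γ ν π πold (Vfun p r γ πold) (Adv p r γ πold) ωt (dvisit p γ πold) s a (r s a) s'
        = ∑ s' : S,
            (p a s s' * (∑ sstar : S,
                (∑ a0 : A, ∑ s0 : S, πold s0 a0 * ν s0 * dvisit p γ πold sstar a0 s0) *
                ∑ astar : A, π sstar astar * Adv p r γ πold astar sstar)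
            + ((1 / (1 - γ)) * ∑ sstar : S,
                (∑ a0 : A, ∑ s0 : S, πold s0 a0 * ν s0 * dvisit p γ πold sstar a0 s0) *
                ∑ astar : A, (π sstar astar - πold sstar astar) * ωt a s astar sstar) *
              (p a s s' *
                (r s a + γ * Vfun p r γ πold s' - Vfun p r γ πold s - Adv p r γ πold a s))
            + ((∑ a0 : A, ∑ s0 : S, πold s0 a0 * ν s0 * ωt a s a0 s0) / (1 - γ)) *
              (p a s s' * ∑ astar : A,
                (γ * ∑ a' : A, πold s' a' * ∑ sstar : S,
                    dvisit p γ πold sstar a' s' * π sstar astar * Adv p r γ πold astar sstar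
                  - ∑ sstar : S, dvisit p γ πold sstar a s * π sstar astar *
                      Adv p r γ πold astar sstar
                  + (1 - γ) * π s astar * Adv p r γ πold astar s))) := by
          refine Finset.sum_congr rfl fun s' _ => ?_
          rw [hpsi_def s', hT2 s']
          ring
      _ = (∑ s' : S, p a s s') *
            (∑ sstar : S,
              (∑ a0 : A, ∑ s0 : S, πold s0 a0 * ν s0 * dvisit p γ πold sstar a0 s0) *
              ∑ astar : A, π sstar astar * Adv p r γ πold astar sstar)
          + ((1 / (1 - γ)) * ∑ sstar : S,
              (∑ a0 : A, ∑ s0 : S, πold s0 a0 * ν s0 * dvisit p γ πold sstar a0 s0) *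
              ∑ astar : A, (π sstar astar - πold sstar astar) * ωt a s astar sstar) *
            (∑ s' : S, p a s s' *
              (r s a + γ * Vfun p r γ πold s' - Vfun p r γ πold s - Adv p r γ πold a s))
          + ((∑ a0 : A, ∑ s0 : S, πold s0 a0 * ν s0 * ωt a s a0 s0) / (1 - γ)) *
            (∑ s' : S, p a s s' * ∑ astar : A,
              (γ * ∑ a' : A, πold s' a' * ∑ sstar : S,
                  dvisit p γ πold sstar a' s' * π sstar astar * Adv p r γ πold astar sstar
                - ∑ sstar : S, dvisit p γ πold sstar a s * π sstar astar *
                    Adv p r γ πold astar sstar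
                + (1 - γ) * π s astar * Adv p r γ πold astar s)) := by
          rw [Finset.sum_add_distrib, Finset.sum_add_distrib, ← Finset.sum_mul,
            ← Finset.mul_sum, ← Finset.mul_sum]
      _ = ∑ sstar : S,
            (∑ a0 : A, ∑ s0 : S, πold s0 a0 * ν s0 * dvisit p γ πold sstar a0 s0) *
            ∑ astar : A, π sstar astar * Adv p r γ πold astar sstar := by
          rw [hpsum a s, one_mul, hbell a s, hB, mul_zero, mul_zero, add_zero, add_zero]
  -- assemble
  unfold Epsi
  have hEp : ∑ a : A, ∑ s : S, pinf a s * ∑ s' : S, p a s s' *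
        psi γ ν π πold (Vfun p r γ πold) (Adv p r γ πold) ωt (dvisit p γ πold) s a (r s a) s'
      = ∑ a : A, ∑ s : S, pinf a s *
          ∑ sstar : S,
            (∑ a0 : A, ∑ s0 : S, πold s0 a0 * ν s0 * dvisit p γ πold sstar a0 s0) *
            ∑ astar : A, π sstar astar * Adv p r γ πold astar sstar :=
    Finset.sum_congr rfl fun a _ => Finset.sum_congr rfl fun s _ => by rw [key a s]
  rw [hEp]
  have hsum1 : ∑ a : A, ∑ s : S, pinf a s = 1 := by
    have h := hpinf.2
    rw [Fintype.sum_prod_type] at h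
    exact h
  have hconst : ∑ a : A, ∑ s : S, pinf a s *
        ∑ sstar : S,
          (∑ a0 : A, ∑ s0 : S, πold s0 a0 * ν s0 * dvisit p γ πold sstar a0 s0) *
          ∑ astar : A, π sstar astar * Adv p r γ πold astar sstar
      = (∑ a : A, ∑ s : S, pinf a s) *
        ∑ sstar : S,
          (∑ a0 : A, ∑ s0 : S, πold s0 a0 * ν s0 * dvisit p γ πold sstar a0 s0) *
          ∑ astar : A, π sstar astar * Adv p r γ πold astar sstar := by
    rw [Finset.sum_mul]
    exact Finset.sum_congr rfl fun a _ => (Finset.sum_mul _ _ _).symm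
  rw [hconst, hsum1, one_mul]
  unfold eta1
  calc ∑ sstar : S,
        (∑ a0 : A, ∑ s0 : S, πold s0 a0 * ν s0 * dvisit p γ πold sstar a0 s0) *
        ∑ astar : A, π sstar astar * Adv p r γ πold astar sstar
      = ∑ sstar : S, ∑ astar : A,
          (∑ a0 : A, ∑ s0 : S, πold s0 a0 * ν s0 * dvisit p γ πold sstar a0 s0) *
          (π sstar astar * Adv p r γ πold astar sstar) :=
        Finset.sum_congr rfl fun sstar _ => Finset.mul_sum _ _ _
    _ = ∑ astar : A, ∑ sstar : S,
          (∑ a0 : A, ∑ s0 : S, πold s0 a0 * ν s0 * dvisit p γ πold sstar a0 s0) *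
          (π sstar astar * Adv p r γ πold astar sstar) := Finset.sum_comm
    _ = ∑ astar : A, ∑ sstar : S,
          π sstar astar * Adv p r γ πold astar sstar * dnu p γ ν πold sstar := by
        refine Finset.sum_congr rfl fun astar _ => Finset.sum_congr rfl fun sstar _ => ?_
        unfold dnu
        rw [Finset.sum_comm]
        ring

end VEPO
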